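/- Let Q be a connected loop-less quiver whose Coxeter-Laplace matrix Λ_Q is the permutation matrix of a permutation ξ of the vertices with cycle type (π_1,...,π_ℓ). Then the minimal positive integer k such that (Id - Cox_Q^k) is nilpotent (equivalently, such that (Id - Cox_Q^k)^2 = 0) equals lcm(π_1,...,π_ℓ). -/

import Mathlib

open Matrix Polynomial

/-- Incidence matrix of a quiver with vertex set `Fin m`, arrow set `Fin n`,
source map `s` and target map `t`: the column of arrow `i` is `e_{s i} - e_{t i}`. -/
def incMatrix {m n : ℕ} (s t : Fin n → Fin m) : Matrix (Fin m) (Fin n) ℤ :=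
  Matrix.of fun v i => (if v = s i then (1 : ℤ) else 0) - (if v = t i then (1 : ℤ) else 0)

/-- Connectedness of the underlying multigraph of the quiver `(s, t)`. -/
def QuiverConnected {m n : ℕ} (s t : Fin n → Fin m) : Prop :=
  ∀ v w : Fin m,
    Relation.ReflTransGen (fun a b => ∃ i : Fin n, (s i = a ∧ t i = b) ∨ (s i = b ∧ t i = a)) v w

/-- The endpoint of arrow `i` other than `v` (for a loop-less quiver). -/
def otherEnd {m n : ℕ} (s t : Fin n → Fin m) (i : Fin n) (v : Fin m) : Fin m :=
  if s i = v then t i else s i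

/-- Iterate the minimally decreasing walk starting at `v`, using only arrows with
index `< b`, always crossing the maximal available arrow. Returns the final vertex. -/
def xiAux {m n : ℕ} (s t : Fin n → Fin m) (b : ℕ) (v : Fin m) : Fin m :=
  if h : (Finset.univ.filter (fun i : Fin n => (s i = v ∨ t i = v) ∧ i.val < b)).Nonempty then
    xiAux s t
      ((Finset.univ.filter (fun i : Fin n => (s i = v ∨ t i = v) ∧ i.val < b)).max' h).val
      (otherEnd s t
        ((Finset.univ.filter (fun i : Fin n => (s i = v ∨ t i = v) ∧ i.val < b)).max' h) v)
  else v
termination_by b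
decreasing_by
  exact (Finset.mem_filter.mp (Finset.max'_mem _ h)).2.2

/-- The permutation of vertices `ξ⁻` determined by structural minimally decreasing walks:
`xiDown s t v` is the end vertex of the structural decreasing walk starting at `v`. -/
def xiDown {m n : ℕ} (s t : Fin n → Fin m) (v : Fin m) : Fin m :=
  xiAux s t n v

/-- Iterate the minimally increasing walk starting at `v`, using only arrows with
index `≥ b`, always crossing the minimal available arrow. Returns the final vertex. -/
def xiAuxUp {m n : ℕ} (s t : Fin n → Fin m) (b : ℕ) (v : Fin m) : Fin m :=
  if h : (Finset.univ.filter (fun i : Fin n => (s i = v ∨ t i = v) ∧ b ≤ i.val)).Nonempty then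
    xiAuxUp s t
      (((Finset.univ.filter (fun i : Fin n => (s i = v ∨ t i = v) ∧ b ≤ i.val)).min' h).val + 1)
      (otherEnd s t
        ((Finset.univ.filter (fun i : Fin n => (s i = v ∨ t i = v) ∧ b ≤ i.val)).min' h) v)
  else v
termination_by n - b
decreasing_by
  have h1 := (Finset.mem_filter.mp (Finset.min'_mem _ h)).2.2
  have h2 := ((Finset.univ.filter (fun i : Fin n => (s i = v ∨ t i = v) ∧ b ≤ i.val)).min' h).isLt
  omega

/-- The map `ξ⁺`: end vertex of the structural minimally increasing walk starting at `v`. -/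
def xiUp {m n : ℕ} (s t : Fin n → Fin m) (v : Fin m) : Fin m :=
  xiAuxUp s t 0 v


/-- Source vertex of a walk-step `(i, ε)`: `s i` if traversed positively, else `t i`. -/
def stepSrc {m n : ℕ} (s t : Fin n → Fin m) (p : Fin n × Bool) : Fin m :=
  if p.2 then s p.1 else t p.1

/-- Target vertex of a walk-step `(i, ε)`. -/
def stepTgt {m n : ℕ} (s t : Fin n → Fin m) (p : Fin n × Bool) : Fin m :=
  if p.2 then t p.1 else s p.1


lemma lcmRepl (s : Multiset ℕ) (j : ℕ) : (s + Multiset.replicate j 1).lcm = s.lcm := by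
  induction j with
  | zero => simp
  | succ j ih =>
    rw [Multiset.replicate_succ, Multiset.add_cons, Multiset.lcm_cons, ih]
    simp

lemma intertwineXY {m n : ℕ} (X : Matrix (Fin n) (Fin m) ℤ) (Y : Matrix (Fin m) (Fin n) ℤ)
    (k : ℕ) : Y * (1 - X * Y) ^ k = (1 - Y * X) ^ k * Y := by
  induction k with
  | zero => simp
  | succ k ih =>
    have h1 : Y * (1 - X * Y) = (1 - Y * X) * Y := by
      rw [Matrix.mul_sub, Matrix.sub_mul, Matrix.mul_one, Matrix.one_mul, Matrix.mul_assoc]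
    rw [pow_succ, pow_succ, ← Matrix.mul_assoc, ih, Matrix.mul_assoc, h1, ← Matrix.mul_assoc]

lemma traceDiffXY {m n : ℕ} (X : Matrix (Fin n) (Fin m) ℤ) (Y : Matrix (Fin m) (Fin n) ℤ)
    (k : ℕ) :
    Matrix.trace ((1 - X * Y) ^ k) + (m : ℤ) = Matrix.trace ((1 - Y * X) ^ k) + (n : ℤ) := by
  induction k with
  | zero => simp [Matrix.trace_one]; ring
  | succ k ih =>
    have e1 : Matrix.trace ((1 - X * Y) ^ (k+1))
        = Matrix.trace ((1 - X * Y) ^ k) - Matrix.trace ((1 - X * Y) ^ k * (X * Y)) := by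
      rw [pow_succ, Matrix.mul_sub, Matrix.mul_one, Matrix.trace_sub]
    have e2 : Matrix.trace ((1 - Y * X) ^ (k+1))
        = Matrix.trace ((1 - Y * X) ^ k) - Matrix.trace ((1 - Y * X) ^ k * (Y * X)) := by
      rw [pow_succ, Matrix.mul_sub, Matrix.mul_one, Matrix.trace_sub]
    have e3 : Matrix.trace ((1 - X * Y) ^ k * (X * Y))
        = Matrix.trace ((1 - Y * X) ^ k * (Y * X)) := by
      calc Matrix.trace ((1 - X * Y) ^ k * (X * Y))
          = Matrix.trace (((1 - X * Y) ^ k * X) * Y) := by rw [Matrix.mul_assoc]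
        _ = Matrix.trace (Y * ((1 - X * Y) ^ k * X)) := Matrix.trace_mul_comm _ _
        _ = Matrix.trace ((Y * (1 - X * Y) ^ k) * X) := by rw [Matrix.mul_assoc]
        _ = Matrix.trace (((1 - Y * X) ^ k * Y) * X) := by rw [intertwineXY]
        _ = Matrix.trace ((1 - Y * X) ^ k * (Y * X)) := by rw [Matrix.mul_assoc]
    rw [e1, e2]; linarith

lemma sqZeroXY {m n : ℕ} (X : Matrix (Fin n) (Fin m) ℤ) (Y : Matrix (Fin m) (Fin n) ℤ)
    (K : ℕ) (hYX : (1 - Y * X) ^ K = 1) :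
    (1 - (1 - X * Y) ^ K) * (1 - (1 - X * Y) ^ K) = 0 := by
  have hYN : Y * (1 - (1 - X * Y) ^ K) = 0 := by
    rw [Matrix.mul_sub, Matrix.mul_one, intertwineXY, hYX, Matrix.one_mul, sub_self]
  have hgeom : (∑ i ∈ Finset.range K, (1 - X * Y) ^ i) * (X * Y)
      = 1 - (1 - X * Y) ^ K := by
    have g := geom_sum_mul (1 - X * Y) K
    have e : (1 - X * Y) - 1 = -(X * Y) := by abel
    rw [e] at g
    have := congrArg Neg.neg g
    simpa [neg_sub] using this
  nth_rewrite 1 [← hgeom]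
  rw [Matrix.mul_assoc, Matrix.mul_assoc, hYN, Matrix.mul_zero, Matrix.mul_zero]

lemma conjPowSub {n : ℕ} (g gi N : Matrix (Fin n) (Fin n) ℤ)
    (h1 : g * gi = 1) (h2 : gi * g = 1) (k : ℕ) :
    1 - (g * N * gi) ^ k = g * (1 - N ^ k) * gi := by
  have hp : (g * N * gi) ^ k = g * N ^ k * gi := by
    induction k with
    | zero => rw [pow_zero, pow_zero, Matrix.mul_one, h1]
    | succ k ih =>
      rw [pow_succ, pow_succ, ih]
      calc g * N ^ k * gi * (g * N * gi)
          = g * N ^ k * ((gi * g) * N * gi) := by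
            simp only [Matrix.mul_assoc]
        _ = g * (N ^ k * N) * gi := by rw [h2, Matrix.one_mul]; simp only [Matrix.mul_assoc]
  rw [hp, Matrix.mul_sub, Matrix.mul_one, Matrix.sub_mul, h1]

lemma traceConj {n : ℕ} (g gi N : Matrix (Fin n) (Fin n) ℤ) (h2 : gi * g = 1) :
    Matrix.trace (g * N * gi) = Matrix.trace N := by
  rw [Matrix.trace_mul_comm, ← Matrix.mul_assoc, h2, Matrix.one_mul]

lemma coxeterConj {n m : ℕ} (G : Matrix (Fin n) (Fin n) ℤ) (W : Matrix (Fin m) (Fin n) ℤ)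
    (hGG : G * G⁻¹ = 1) (hGram : Wᵀ * W = G + Gᵀ) :
    -(Gᵀ * G⁻¹) = G * (1 - G⁻¹ * Wᵀ * W) * G⁻¹ := by
  have h4 : G * (G⁻¹ * Wᵀ * W) = G + Gᵀ := by
    rw [← Matrix.mul_assoc, ← Matrix.mul_assoc, hGG, Matrix.one_mul, hGram]
  have h5 : G * (1 - G⁻¹ * Wᵀ * W) = -Gᵀ := by
    rw [Matrix.mul_sub, Matrix.mul_one, h4]; abel
  rw [h5, Matrix.neg_mul]

/-- if the Coxeter-Laplace matrix of a connected loop-less quiver is the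
permutation matrix of a permutation `ξ` with cycle type `(π_1,…,π_ℓ)`, then the minimal
positive `k` such that `Id - Cox_Q^k` is nilpotent equals `lcm(π_1,…,π_ℓ)`. -/
theorem reduced_coxeter_number {m n : ℕ} (hm : 0 < m) (s t : Fin n → Fin m)
    (hloop : ∀ i : Fin n, s i ≠ t i) (hconn : QuiverConnected s t)
    (G : Matrix (Fin n) (Fin n) ℤ)
    (hupper : ∀ i j : Fin n, j < i → G i j = 0)
    (hdiag : ∀ i : Fin n, G i i = 1)
    (hGram : (incMatrix s t)ᵀ * incMatrix s t = G + Gᵀ)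
    (ξ : Equiv.Perm (Fin m))
    (hΛ : 1 - incMatrix s t * G⁻¹ * (incMatrix s t)ᵀ
        = Matrix.of fun w v : Fin m => if w = ξ v then (1 : ℤ) else 0) :
    IsNilpotent (1 - (-(Gᵀ * G⁻¹)) ^ (ξ.partition.parts.lcm))
    ∧ ∀ k : ℕ, 0 < k → IsNilpotent (1 - (-(Gᵀ * G⁻¹)) ^ k) →
        ξ.partition.parts.lcm ≤ k := by
    classical
  have hdet : G.det = 1 := by
    have hbt : G.BlockTriangular id := by intro i j hij; exact hupper i j hij
    rw [Matrix.det_of_upperTriangular hbt]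
    simp [hdiag]
  have hunit : IsUnit G.det := by rw [hdet]; exact isUnit_one
  have hGG : G * G⁻¹ = 1 := Matrix.mul_nonsing_inv G hunit
  have hGG' : G⁻¹ * G = 1 := Matrix.nonsing_inv_mul G hunit
  have hPpow : ∀ k : ℕ,
      (Matrix.of (fun w v : Fin m => if w = ξ v then (1 : ℤ) else 0)) ^ k
      = Matrix.of (fun w v : Fin m => if w = (ξ ^ k) v then (1 : ℤ) else 0) := by
    intro k; induction k with
    | zero => ext w v; simp [Matrix.one_apply]
    | succ k ih =>
      ext w v
      rw [pow_succ, ih]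
      simp only [Matrix.mul_apply, Matrix.of_apply]
      rw [Finset.sum_eq_single (ξ v)]
      · simp [pow_succ]
      · intro u _ hu; simp [hu]
      · intro h; exact absurd (Finset.mem_univ _) h
  have hLam : (1 : Matrix (Fin m) (Fin m) ℤ) - incMatrix s t * (G⁻¹ * (incMatrix s t)ᵀ)
      = Matrix.of (fun w v : Fin m => if w = ξ v then (1 : ℤ) else 0) := by
    rw [← Matrix.mul_assoc]; exact hΛ
  have hCk : ∀ k : ℕ, (1 : Matrix (Fin n) (Fin n) ℤ) - (-(Gᵀ * G⁻¹)) ^ k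
      = G * (1 - (1 - G⁻¹ * (incMatrix s t)ᵀ * incMatrix s t) ^ k) * G⁻¹ := by
    intro k
    rw [coxeterConj G (incMatrix s t) hGG hGram, conjPowSub G G⁻¹ _ hGG hGG' k]
  have hord : ξ.partition.parts.lcm = orderOf ξ := by
    rw [Equiv.Perm.parts_partition, lcmRepl, Equiv.Perm.lcm_cycleType]
  constructor
  · -- forward direction
    set K := ξ.partition.parts.lcm with hK
    have hxiK : ξ ^ K = 1 := by rw [hord]; exact pow_orderOf_eq_one ξ
    have hYX : ((1 : Matrix (Fin m) (Fin m) ℤ)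
        - incMatrix s t * (G⁻¹ * (incMatrix s t)ᵀ)) ^ K = 1 := by
      rw [hLam, hPpow K, hxiK]; ext w v; simp [Matrix.one_apply]; congr
    refine ⟨2, ?_⟩
    rw [hCk K, pow_two]
    calc G * (1 - (1 - G⁻¹ * (incMatrix s t)ᵀ * incMatrix s t) ^ K) * G⁻¹
          * (G * (1 - (1 - G⁻¹ * (incMatrix s t)ᵀ * incMatrix s t) ^ K) * G⁻¹)
        = G * ((1 - (1 - G⁻¹ * (incMatrix s t)ᵀ * incMatrix s t) ^ K) * ((G⁻¹ * G)
            * ((1 - (1 - G⁻¹ * (incMatrix s t)ᵀ * incMatrix s t) ^ K) * G⁻¹))) := by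
          simp only [Matrix.mul_assoc]
      _ = G * (((1 - (1 - G⁻¹ * (incMatrix s t)ᵀ * incMatrix s t) ^ K)
            * (1 - (1 - G⁻¹ * (incMatrix s t)ᵀ * incMatrix s t) ^ K)) * G⁻¹) := by
          rw [hGG', Matrix.one_mul]; simp only [Matrix.mul_assoc]
      _ = 0 := by
          rw [sqZeroXY (G⁻¹ * (incMatrix s t)ᵀ) (incMatrix s t) K hYX,
            Matrix.zero_mul, Matrix.mul_zero]
  · -- minimality
    intro k hk hnil
    have htr0 : Matrix.trace ((1 : Matrix (Fin n) (Fin n) ℤ) - (-(Gᵀ * G⁻¹)) ^ k) = 0 :=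
      (Matrix.isNilpotent_trace_of_isNilpotent hnil).eq_zero
    rw [hCk k, traceConj G G⁻¹ _ hGG'] at htr0
    have htrA : Matrix.trace ((1 - G⁻¹ * (incMatrix s t)ᵀ * incMatrix s t) ^ k) = (n : ℤ) := by
      rw [Matrix.trace_sub, Matrix.trace_one] at htr0
      simp only [Fintype.card_fin] at htr0
      linarith
    have htrB : Matrix.trace ((1 - incMatrix s t * (G⁻¹ * (incMatrix s t)ᵀ)) ^ k)
        = (m : ℤ) := by
      have := traceDiffXY (G⁻¹ * (incMatrix s t)ᵀ) (incMatrix s t) k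
      linarith
    rw [hLam, hPpow k] at htrB
    have htrB' : (∑ v : Fin m, if v = (ξ ^ k) v then (1 : ℤ) else 0) = (m : ℤ) := by
      rw [← htrB]; rfl
    have hfix : ∀ v : Fin m, (ξ ^ k) v = v := by
      have h0 : (∑ v : Fin m, ((1 : ℤ) - if v = (ξ ^ k) v then 1 else 0)) = 0 := by
        rw [Finset.sum_sub_distrib, htrB']
        simp
      have hnn : ∀ v ∈ Finset.univ, (0 : ℤ) ≤ 1 - if v = (ξ ^ k) v then 1 else 0 := by
        intro v _; split <;> norm_num
      have hall := (Finset.sum_eq_zero_iff_of_nonneg hnn).mp h0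
      intro v
      have hv := hall v (Finset.mem_univ v)
      by_contra hne
      rw [if_neg (fun h => hne h.symm)] at hv
      norm_num at hv
    have hxk : ξ ^ k = 1 := Equiv.ext fun v => hfix v
    rw [hord]
    exact Nat.le_of_dvd hk (orderOf_dvd_of_pow_eq_one hxk)
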